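/- arXiv:1510.00055 — 2 statements merged into one kernel-verified Lean document; each statement's English description precedes it below -/
import Mathlib

section
/- Let w ∈ ℂ^m be a fixed vector, let R₀ be an m×m Hermitian positive semidefinite complex matrix, and for q = 1,…,Q let B_q be an m×(P·N) complex matrix and R_q a P×P Hermitian positive semidefinite complex matrix. For s ∈ ℂ^N (regarded as an N×1 matrix) define f(s) = Re( wᴴ ( R₀ + Σ_{q=1}^{Q} B_q (I_P ⊗ s) R_q (I_P ⊗ s)ᴴ B_qᴴ ) w ), where I_P ⊗ s is the PN×P Kronecker product of the P×P identity with s. Then f is convex on ℂ^N viewed as a real vector space, i.e. f(t s₁ + (1−t) s₂) ≤ t f(s₁) + (1−t) f(s₂) for all s₁, s₂ ∈ ℂ^N and t ∈ [0,1]. -/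
open Matrix
open scoped ComplexOrder Kronecker

/-- The STAP output-power objective `f(s) = Re (wᴴ R_u(s) w)`, where
`R_u(s) = R₀ + Σ_q B_q (I_P ⊗ s) R_q (I_P ⊗ s)ᴴ B_qᴴ`; the waveform `s` is a
column vector, i.e. an `N × 1` matrix. -/
noncomputable def stapObjective (m N P Q : ℕ)
    (w : Matrix (Fin m) (Fin 1) ℂ)
    (R₀ : Matrix (Fin m) (Fin m) ℂ)
    (B : Fin Q → Matrix (Fin m) (Fin P × Fin N) ℂ)
    (R : Fin Q → Matrix (Fin P × Fin 1) (Fin P × Fin 1) ℂ)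
    (s : Matrix (Fin N) (Fin 1) ℂ) : ℝ :=
  ((wᴴ *
      (R₀ + ∑ q : Fin Q,
        B q * ((1 : Matrix (Fin P) (Fin P) ℂ) ⊗ₖ s) * R q *
          ((1 : Matrix (Fin P) (Fin P) ℂ) ⊗ₖ s)ᴴ * (B q)ᴴ) *
      w) 0 0).re

private lemma stap_entry_eq {n : Type*} [Fintype n] [DecidableEq n]
    (R : Matrix n n ℂ) (v : Matrix n (Fin 1) ℂ) :
    (vᴴ * R * v) 0 0 = star (fun i => v i 0) ⬝ᵥ R.mulVec (fun i => v i 0) := by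
  simp only [Matrix.mul_apply, dotProduct, Matrix.mulVec, conjTranspose_apply,
    Finset.sum_mul, Finset.mul_sum, Pi.star_apply]
  rw [Finset.sum_comm]
  apply Finset.sum_congr rfl; intro j _
  apply Finset.sum_congr rfl; intro i _
  ring

private lemma stap_quad_nonneg {n : Type*} [Fintype n] [DecidableEq n]
    (R : Matrix n n ℂ) (hR : R.PosSemidef) (v : Matrix n (Fin 1) ℂ) :
    0 ≤ ((vᴴ * R * v) 0 0).re := by
  have h := hR.dotProduct_mulVec_nonneg (fun i => v i 0)
  rw [stap_entry_eq]
  exact (Complex.le_def.mp h).1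

private lemma stap_quad_key {n : Type*} [Fintype n] [DecidableEq n]
    (R : Matrix n n ℂ) (hR : R.PosSemidef)
    (v₁ v₂ : Matrix n (Fin 1) ℂ) (t : ℝ) (ht0 : 0 ≤ t) (ht1 : t ≤ 1) :
    (((t • v₁ + (1 - t) • v₂)ᴴ * R * (t • v₁ + (1 - t) • v₂)) 0 0).re ≤
      t * ((v₁ᴴ * R * v₁) 0 0).re + (1 - t) * ((v₂ᴴ * R * v₂) 0 0).re := by
  have hconj : ((v₂ᴴ * R * v₁) 0 0).re = ((v₁ᴴ * R * v₂) 0 0).re := by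
    have : (v₁ᴴ * R * v₂)ᴴ = v₂ᴴ * R * v₁ := by
      simp [conjTranspose_mul, hR.1.eq, Matrix.mul_assoc]
    rw [← this, conjTranspose_apply, Complex.star_def, Complex.conj_re]
  have hd := stap_quad_nonneg R hR (v₁ - v₂)
  have hexp : ((v₁ - v₂)ᴴ * R * (v₁ - v₂)) 0 0 =
      (v₁ᴴ * R * v₁) 0 0 - (v₁ᴴ * R * v₂) 0 0 - (v₂ᴴ * R * v₁) 0 0 + (v₂ᴴ * R * v₂) 0 0 := by
    simp only [conjTranspose_sub, Matrix.sub_mul, Matrix.mul_sub, Matrix.sub_apply,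
      Matrix.add_apply]
    ring
  have hexp2 : ((t • v₁ + (1 - t) • v₂)ᴴ * R * (t • v₁ + (1 - t) • v₂)) 0 0 =
      (t*t : ℝ) • ((v₁ᴴ * R * v₁) 0 0) + (t*(1-t) : ℝ) • ((v₁ᴴ * R * v₂) 0 0)
      + ((1-t)*t : ℝ) • ((v₂ᴴ * R * v₁) 0 0) + ((1-t)*(1-t) : ℝ) • ((v₂ᴴ * R * v₂) 0 0) := by
    simp only [conjTranspose_add, conjTranspose_smul, star_trivial, Matrix.add_mul,
      Matrix.mul_add, Matrix.smul_mul, Matrix.mul_smul, Matrix.add_apply, Matrix.smul_apply,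
      smul_smul]
    ring_nf
    module
  rw [hexp] at hd
  rw [hexp2]
  simp only [Complex.add_re, Complex.sub_re, Complex.smul_re, smul_eq_mul] at *
  nlinarith [mul_nonneg (mul_nonneg ht0 (sub_nonneg.mpr ht1)) hd]

private lemma stap_decomp (m N P Q : ℕ)
    (w : Matrix (Fin m) (Fin 1) ℂ)
    (R₀ : Matrix (Fin m) (Fin m) ℂ)
    (B : Fin Q → Matrix (Fin m) (Fin P × Fin N) ℂ)
    (R : Fin Q → Matrix (Fin P × Fin 1) (Fin P × Fin 1) ℂ)
    (s : Matrix (Fin N) (Fin 1) ℂ) :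
    stapObjective m N P Q w R₀ B R s =
      ((wᴴ * R₀ * w) 0 0).re +
      ∑ q : Fin Q,
        (((((1 : Matrix (Fin P) (Fin P) ℂ) ⊗ₖ s)ᴴ * (B q)ᴴ * w)ᴴ * R q *
          (((1 : Matrix (Fin P) (Fin P) ℂ) ⊗ₖ s)ᴴ * (B q)ᴴ * w)) 0 0).re := by
  unfold stapObjective
  rw [Matrix.mul_add, Matrix.add_mul, Matrix.add_apply, Complex.add_re]
  congr 1
  rw [Matrix.mul_sum, Matrix.sum_mul, Matrix.sum_apply, Complex.re_sum]
  apply Finset.sum_congr rfl; intro q _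
  congr 1
  simp [conjTranspose_mul, Matrix.mul_assoc]

private lemma stap_kron_lin (N P : ℕ) (s₁ s₂ : Matrix (Fin N) (Fin 1) ℂ) (t : ℝ) :
    ((1 : Matrix (Fin P) (Fin P) ℂ) ⊗ₖ (t • s₁ + (1 - t) • s₂)) =
      t • ((1 : Matrix (Fin P) (Fin P) ℂ) ⊗ₖ s₁) +
        (1 - t) • ((1 : Matrix (Fin P) (Fin P) ℂ) ⊗ₖ s₂) := by
  ext ⟨i, j⟩ ⟨k, l⟩
  simp [Matrix.kroneckerMap_apply, Matrix.add_apply, Matrix.smul_apply, smul_eq_mul]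
  ring

/-- Proposition 1: the STAP objective is convex in the waveform `s` for any
fixed but arbitrary filter `w`. -/
theorem stmt_0 (m N P Q : ℕ)
    (w : Matrix (Fin m) (Fin 1) ℂ)
    (R₀ : Matrix (Fin m) (Fin m) ℂ) (hR₀ : R₀.PosSemidef)
    (B : Fin Q → Matrix (Fin m) (Fin P × Fin N) ℂ)
    (R : Fin Q → Matrix (Fin P × Fin 1) (Fin P × Fin 1) ℂ)
    (hR : ∀ q, (R q).PosSemidef)
    (s₁ s₂ : Matrix (Fin N) (Fin 1) ℂ) (t : ℝ) (ht : t ∈ Set.Icc (0 : ℝ) 1) :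
    stapObjective m N P Q w R₀ B R (t • s₁ + (1 - t) • s₂) ≤
      t * stapObjective m N P Q w R₀ B R s₁ +
        (1 - t) * stapObjective m N P Q w R₀ B R s₂ := by
  obtain ⟨ht0, ht1⟩ := ht
  rw [stap_decomp, stap_decomp, stap_decomp]
  set c := ((wᴴ * R₀ * w) 0 0).re with hc
  set v : Fin Q → Matrix (Fin N) (Fin 1) ℂ → Matrix (Fin P × Fin 1) (Fin 1) ℂ :=
    fun q s => ((1 : Matrix (Fin P) (Fin P) ℂ) ⊗ₖ s)ᴴ * (B q)ᴴ * w with hv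
  have hvl : ∀ q, v q (t • s₁ + (1 - t) • s₂) = t • v q s₁ + (1 - t) • v q s₂ := by
    intro q
    rw [hv]
    simp only [stap_kron_lin, conjTranspose_add, conjTranspose_smul, star_trivial,
      Matrix.add_mul, Matrix.smul_mul]
  have hsum : ∑ q : Fin Q,
      (((v q (t • s₁ + (1 - t) • s₂))ᴴ * R q * (v q (t • s₁ + (1 - t) • s₂))) 0 0).re ≤
      ∑ q : Fin Q, (t * (((v q s₁)ᴴ * R q * (v q s₁)) 0 0).re +
        (1 - t) * (((v q s₂)ᴴ * R q * (v q s₂)) 0 0).re) := by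
    apply Finset.sum_le_sum
    intro q _
    rw [hvl q]
    exact stap_quad_key (R q) (hR q) (v q s₁) (v q s₂) t ht0 ht1
  rw [Finset.sum_add_distrib, ← Finset.mul_sum, ← Finset.mul_sum] at hsum
  nlinarith [hsum]
end

section
/- Let A and B be n×n Hermitian complex matrices, and let λ₁(A) ≥ λ₂(A) ≥ … ≥ λ_n(A) and λ₁(B) ≥ λ₂(B) ≥ … ≥ λ_n(B) denote their eigenvalues arranged in nonincreasing order. Then Σ_{i=1}^{n} λ_i(A) λ_{n−i+1}(B) ≤ Re(Tr(AB)) ≤ Σ_{i=1}^{n} λ_i(A) λ_i(B). (For Hermitian A and B the trace Tr(AB) is real.) -/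
open Matrix Finset

section aux

variable {n : ℕ}

/-- Rearrangement bounds for antitone `a b`. -/
lemma rearr_bounds (a b : Fin n → ℝ) (ha : Antitone a) (hb : Antitone b)
    (ρ : Equiv.Perm (Fin n)) :
    (∑ i : Fin n, a i * b i.rev) ≤ ∑ i : Fin n, a i * b (ρ i) ∧
      (∑ i : Fin n, a i * b (ρ i)) ≤ ∑ i : Fin n, a i * b i := by
  constructor
  · have hc : Monotone (fun i : Fin n => b i.rev) :=
      fun i j hij => hb (Fin.rev_le_rev.mpr hij)
    have hav : Antivary a (fun i : Fin n => b i.rev) := ha.antivary hc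
    have := hav.sum_mul_le_sum_mul_comp_perm (σ := ρ.trans (Fin.revPerm))
    simpa using this
  · exact (ha.monovary hb).sum_mul_comp_perm_le_sum_mul

end aux

/-- Lemma 4 (Ruhe/Lasserre trace inequality): if `a` and `b` enumerate the
eigenvalues of the Hermitian matrices `A` and `B` in nonincreasing order, then
`Σ_i a_i b_{n-i+1} ≤ Re (Tr (A B)) ≤ Σ_i a_i b_i`. -/
theorem stmt_5 (n : ℕ) (A B : Matrix (Fin n) (Fin n) ℂ)
    (hA : A.IsHermitian) (hB : B.IsHermitian)
    (a b : Fin n → ℝ) (σ τ : Equiv.Perm (Fin n))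
    (haσ : a = hA.eigenvalues ∘ σ) (hbτ : b = hB.eigenvalues ∘ τ)
    (ha : Antitone a) (hb : Antitone b) :
    (∑ i : Fin n, a i * b i.rev) ≤ ((A * B).trace).re ∧
      ((A * B).trace).re ≤ ∑ i : Fin n, a i * b i := by
  classical
  set U : Matrix (Fin n) (Fin n) ℂ := (hA.eigenvectorUnitary : Matrix (Fin n) (Fin n) ℂ) with hU
  set V : Matrix (Fin n) (Fin n) ℂ := (hB.eigenvectorUnitary : Matrix (Fin n) (Fin n) ℂ) with hV
  set W : Matrix (Fin n) (Fin n) ℂ := star U * V with hWdef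
  have hUu : U ∈ Matrix.unitaryGroup (Fin n) ℂ := hA.eigenvectorUnitary.2
  have hVu : V ∈ Matrix.unitaryGroup (Fin n) ℂ := hB.eigenvectorUnitary.2
  have hWu : W ∈ Matrix.unitaryGroup (Fin n) ℂ :=
    Submonoid.mul_mem _ (Unitary.star_mem hUu) hVu
  have hW1 : W * star W = 1 := mem_unitaryGroup_iff.mp hWu
  have hW2 : star W * W = 1 := mem_unitaryGroup_iff'.mp hWu
  set da : Fin n → ℝ := hA.eigenvalues with hda
  set eb : Fin n → ℝ := hB.eigenvalues with heb
  set D : Matrix (Fin n) (Fin n) ℂ := diagonal (fun i => (da i : ℂ)) with hD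
  set E : Matrix (Fin n) (Fin n) ℂ := diagonal (fun i => (eb i : ℂ)) with hE
  -- trace identity
  have hABtr : (A * B).trace = (D * W * E * star W).trace := by
    have hAs : A = U * D * star U := by
      simpa [hD, Function.comp_def, diagonal] using hA.spectral_theorem
    have hBs : B = V * E * star V := by
      simpa [hE, Function.comp_def, diagonal] using hB.spectral_theorem
    have hUU : U * star U = 1 := mem_unitaryGroup_iff.mp hUu
    rw [hAs, hBs]
    have : U * D * star U * (V * E * star V)
        = U * (D * W * E * star W) * star U := by
      simp only [hWdef, Matrix.star_mul, star_star, mul_assoc]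
      rw [hUU, mul_one]
    rw [this, trace_mul_comm (U * (D * W * E * star W)) (star U), ← mul_assoc,
      mem_unitaryGroup_iff'.mp hUu, one_mul]
  set S : Matrix (Fin n) (Fin n) ℝ := fun i j => Complex.normSq (W i j) with hS
  -- entrywise trace formula
  have htr : ((A * B).trace).re = ∑ i : Fin n, ∑ j : Fin n, da i * eb j * S i j := by
    rw [hABtr]
    have : (D * W * E * star W).trace
        = ∑ i : Fin n, ∑ j : Fin n, ((da i * eb j * S i j : ℝ) : ℂ) := by
      rw [Matrix.trace]
      refine Finset.sum_congr rfl fun i _ => ?_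
      rw [Matrix.diag_apply, Matrix.mul_apply]
      refine Finset.sum_congr rfl fun j _ => ?_
      rw [Matrix.mul_diagonal, Matrix.diagonal_mul, Matrix.star_apply]
      calc (da i : ℂ) * W i j * (eb j : ℂ) * star (W i j)
          = (da i : ℂ) * (eb j : ℂ) * (W i j * star (W i j)) := by ring
        _ = ((da i * eb j * S i j : ℝ) : ℂ) := by
            rw [Complex.star_def, Complex.mul_conj]; push_cast; ring
    rw [this, Complex.re_sum]
    refine Finset.sum_congr rfl fun i _ => ?_
    rw [Complex.re_sum]
    simp
  -- S is doubly stochastic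
  have hSds : S ∈ doublyStochastic ℝ (Fin n) := by
    rw [mem_doublyStochastic_iff_sum]
    refine ⟨fun i j => Complex.normSq_nonneg _, fun i => ?_, fun j => ?_⟩
    · have h1 : (W * star W) i i = 1 := by rw [hW1]; simp
      have h2 : ∑ j : Fin n, (W i j * star (W i j)) = 1 := by
        simpa [Matrix.mul_apply, Matrix.star_apply] using h1
      have h3 := congrArg Complex.re h2
      rw [Complex.re_sum] at h3
      simpa [Complex.star_def, Complex.mul_conj, hS] using h3
    · have h1 : (star W * W) j j = 1 := by rw [hW2]; simp
      have h2 : ∑ i : Fin n, (star (W i j) * W i j) = 1 := by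
        simpa [Matrix.mul_apply, Matrix.star_apply] using h1
      have h3 := congrArg Complex.re h2
      rw [Complex.re_sum] at h3
      simpa [mul_comm, Complex.star_def, Complex.mul_conj, hS] using h3
  obtain ⟨w, hw0, hw1, hwS⟩ := exists_eq_sum_perm_of_mem_doublyStochastic hSds
  -- rewrite trace as convex combination
  have hSij : ∀ i j, S i j = ∑ π : Equiv.Perm (Fin n), w π * (Equiv.Perm.permMatrix ℝ π) i j := by
    intro i j
    have := congrFun (congrFun hwS i) j
    simpa [Matrix.sum_apply, Matrix.smul_apply, smul_eq_mul] using this.symm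
  have hinner : ∀ (π : Equiv.Perm (Fin n)) (i : Fin n),
      ∑ j : Fin n, eb j * (Equiv.Perm.permMatrix ℝ π) i j = eb (π i) := by
    intro π i
    simp [Equiv.Perm.permMatrix, PEquiv.toMatrix_apply, Equiv.toPEquiv_apply, mul_ite,
      Finset.sum_ite_eq]
  have hcomb : ((A * B).trace).re
      = ∑ π : Equiv.Perm (Fin n), w π * ∑ i : Fin n, da i * eb (π i) := by
    rw [htr]
    have step : ∀ i : Fin n, ∑ j : Fin n, da i * eb j * S i j
        = ∑ π : Equiv.Perm (Fin n), w π * (da i * eb (π i)) := by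
      intro i
      have h4 : ∀ j : Fin n, da i * eb j * S i j = ∑ π : Equiv.Perm (Fin n),
          w π * (da i * (eb j * (Equiv.Perm.permMatrix ℝ π) i j)) := by
        intro j
        rw [hSij i j, Finset.mul_sum]
        exact Finset.sum_congr rfl fun π _ => by ring
      rw [Finset.sum_congr rfl fun j _ => h4 j, Finset.sum_comm]
      refine Finset.sum_congr rfl fun π _ => ?_
      rw [← Finset.mul_sum, ← Finset.mul_sum, hinner π i]
    rw [Finset.sum_congr rfl fun i _ => step i, Finset.sum_comm]
    exact Finset.sum_congr rfl fun π _ => by rw [← Finset.mul_sum]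
  -- each inner sum is a permuted sum of a, b
  have hperm : ∀ π : Equiv.Perm (Fin n), ∑ i : Fin n, da i * eb (π i)
      = ∑ j : Fin n, a j * b (((σ.trans π).trans τ.symm) j) := by
    intro π
    rw [← Equiv.sum_comp σ (fun i => da i * eb (π i))]
    refine Finset.sum_congr rfl fun j _ => ?_
    have h1 : a j = da (σ j) := by rw [haσ]; rfl
    have h2 : b (τ.symm (π (σ j))) = eb (π (σ j)) := by
      rw [hbτ]; simp
    simp [h1, ← h2, Equiv.trans_apply]
  constructor
  · rw [hcomb]
    calc (∑ i : Fin n, a i * b i.rev)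
        = ∑ π : Equiv.Perm (Fin n), w π * ∑ i : Fin n, a i * b i.rev := by
          rw [← Finset.sum_mul, hw1, one_mul]
      _ ≤ _ := by
          refine Finset.sum_le_sum fun π _ => ?_
          refine mul_le_mul_of_nonneg_left ?_ (hw0 π)
          rw [hperm π]
          exact (rearr_bounds a b ha hb _).1
  · rw [hcomb]
    calc (∑ π : Equiv.Perm (Fin n), w π * ∑ i : Fin n, da i * eb (π i))
        ≤ ∑ π : Equiv.Perm (Fin n), w π * ∑ i : Fin n, a i * b i := by
          refine Finset.sum_le_sum fun π _ => ?_
          refine mul_le_mul_of_nonneg_left ?_ (hw0 π)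
          rw [hperm π]
          exact (rearr_bounds a b ha hb _).2
      _ = ∑ i : Fin n, a i * b i := by rw [← Finset.sum_mul, hw1, one_mul]
end
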